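/- (Correctness of the skip trick) Let A and B be strings of length n over a finite alphabet Σ, let a ∈ Σ be a letter, and let ℓ satisfy 1 ≤ ℓ ≤ n. Let max_A denote the maximum of |u|_a over all length-ℓ factors u of A, and let min_B denote the minimum of |v|_a over all length-ℓ factors v of B. If g = min_B − max_A > 0, then for every ℓ' with ℓ − g < ℓ' ≤ ℓ, the strings A and B have no common abelian factor of length ℓ'. -/

import Mathlib

/-- `A` and `B` have a common abelian factor of length `ℓ`: there exist factors
`u` of `A` and `v` of `B`, both of length `ℓ`, with equal Parikh vectors. -/
def HasCommonAbelianFactor {α : Type*} [DecidableEq α] (A B : List α) (ℓ : ℕ) : Prop :=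
  ∃ u v : List α, u <:+: A ∧ v <:+: B ∧ u.length = ℓ ∧ v.length = ℓ ∧
    ∀ c : α, u.count c = v.count c

/-- The set of numbers of occurrences of the letter `a` in length-`ℓ` factors of `S`. -/
def factorLetterCounts {α : Type*} [DecidableEq α] (S : List α) (a : α) (ℓ : ℕ) : Set ℕ :=
  {k | ∃ w : List α, w <:+: S ∧ w.length = ℓ ∧ w.count a = k}

/-- Any factor of length `≤ ℓ` extends to a factor of length `ℓ`. -/
lemma extend_factor {α : Type*} {A u : List α} {ℓ : ℕ} (hu : u <:+: A)
    (h1 : u.length ≤ ℓ) (h2 : ℓ ≤ A.length) :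
    ∃ w : List α, w <:+: A ∧ w.length = ℓ ∧ u <:+: w := by
  obtain ⟨s, t, rfl⟩ := hu
  by_cases hc : ℓ ≤ u.length + t.length
  · refine ⟨u ++ t.take (ℓ - u.length), ⟨s, t.drop (ℓ - u.length), by simp⟩, ?_, ?_⟩
    · simp; omega
    · exact ⟨[], t.take (ℓ - u.length), by simp⟩
  · push_neg at hc
    set k := ℓ - (u.length + t.length) with hk
    refine ⟨s.drop (s.length - k) ++ u ++ t,
      ⟨s.take (s.length - k), [], by rw [List.append_nil, ← List.append_assoc, ← List.append_assoc, List.take_append_drop]⟩, ?_, ?_⟩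
    · simp at h2 ⊢; omega
    · exact ⟨s.drop (s.length - k), t, by simp⟩

lemma count_le_of_infix {α : Type*} [DecidableEq α] {u w : List α} (h : u <:+: w) (a : α) :
    w.count a ≤ u.count a + (w.length - u.length) := by
  obtain ⟨s, t, rfl⟩ := h
  simp [List.count_append]
  have : s.count a ≤ s.length := List.count_le_length
  have : t.count a ≤ t.length := List.count_le_length
  omega

/-- Correctness of the skip trick: let `A`, `B` be strings of length `n`, let
`a` be a letter and `1 ≤ ℓ ≤ n`. Let `maxA` be the maximum of `|u|ₐ` over
length-`ℓ` factors `u` of `A` and `minB` the minimum of `|v|ₐ` over length-`ℓ`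
factors `v` of `B`. If `g = minB - maxA > 0`, then for every `ℓ'` with
`ℓ - g < ℓ' ≤ ℓ`, the strings `A` and `B` have no common abelian factor of
length `ℓ'`. -/
theorem skip_trick_correct {α : Type*} [DecidableEq α] (A B : List α) (a : α)
    (n ℓ : ℕ) (hA : A.length = n) (hB : B.length = n) (hℓ1 : 1 ≤ ℓ) (hℓn : ℓ ≤ n)
    (maxA minB g : ℕ)
    (hmaxA : maxA = sSup (factorLetterCounts A a ℓ))
    (hminB : minB = sInf (factorLetterCounts B a ℓ))
    (hg : g = minB - maxA) (hgpos : 0 < g) :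
    ∀ ℓ' : ℕ, ℓ - g < ℓ' → ℓ' ≤ ℓ → ¬ HasCommonAbelianFactor A B ℓ' := by
  rintro ℓ' hgt hle ⟨u, v, hu, hv, hul, hvl, hc⟩
  -- extend u in A
  obtain ⟨w1, hw1A, hw1l, huw1⟩ := extend_factor (ℓ := ℓ) hu (by omega) (by rw [hA]; omega)
  obtain ⟨w2, hw2B, hw2l, hvw2⟩ := extend_factor (ℓ := ℓ) hv (by omega) (by rw [hB]; omega)
  have hbdd : BddAbove (factorLetterCounts A a ℓ) := by
    refine ⟨ℓ, fun k hk => ?_⟩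
    obtain ⟨w, _, hwl, rfl⟩ := hk
    exact hwl ▸ (List.count_le_length : w.count a ≤ w.length)
  have h1 : w1.count a ≤ maxA := by
    rw [hmaxA]
    exact le_csSup hbdd ⟨w1, hw1A, hw1l, rfl⟩
  have h2 : minB ≤ w2.count a := by
    rw [hminB]
    exact Nat.sInf_le ⟨w2, hw2B, hw2l, rfl⟩
  have h3 : u.count a ≤ w1.count a := (huw1.sublist.count_le a)
  have h4 : w2.count a ≤ v.count a + (ℓ - ℓ') := by
    have := count_le_of_infix hvw2 a
    omega
  have := hc a
  omega
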